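/- Let k ≥ 1, ε ∈ (0,1], and let p be a distribution on [k] with TV(p, u_k) ≥ ε. Then the number of elements i ∈ [k] with p_i < (1 − ε/2)/k is at least εk/2. -/

import Mathlib

open scoped BigOperators Classical

/-- If `p` is a distribution on `[k]` at total variation distance at least `ε` from uniform,
then at least `εk/2` elements `i` satisfy `p_i < (1 - ε/2)/k`. -/
theorem many_light_elements (k : ℕ) (hk : 1 ≤ k) (ε : ℝ) (hε : 0 < ε) (hε1 : ε ≤ 1)
    (p : Fin k → ℝ) (hp : ∀ i, 0 ≤ p i) (hsum : ∑ i, p i = 1)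
    (hTV : ε ≤ (1 / 2) * ∑ i, |p i - 1 / k|) :
    ε * k / 2 ≤ ((Finset.univ.filter fun i : Fin k => p i < (1 - ε / 2) / k).card : ℝ) := by
  have hk0 : (0:ℝ) < k := by exact_mod_cast hk
  set L := Finset.univ.filter fun i : Fin k => p i < (1 - ε / 2) / k with hL
  have hsumd : ∑ i, (1/(k:ℝ) - p i) = 0 := by
    rw [Finset.sum_sub_distrib, hsum, Finset.sum_const, Finset.card_univ, Fintype.card_fin, nsmul_eq_mul]
    field_simp; ring
  have habs : ∑ i, |p i - 1/(k:ℝ)| = 2 * ∑ i, max (1/(k:ℝ) - p i) 0 := by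
    have h1 : ∀ i : Fin k, |p i - 1/(k:ℝ)| =
        2 * max (1/(k:ℝ) - p i) 0 - (1/(k:ℝ) - p i) := by
      intro i
      rcases le_total (p i) (1/(k:ℝ)) with h | h
      · rw [abs_of_nonpos (by linarith), max_eq_left (by linarith)]; ring
      · rw [abs_of_nonneg (by linarith), max_eq_right (by linarith)]; ring
    rw [Finset.sum_congr rfl fun i _ => h1 i, Finset.sum_sub_distrib, hsumd,
      ← Finset.mul_sum]
    ring
  have hε2 : ε ≤ ∑ i, max (1/(k:ℝ) - p i) 0 := by
    rw [habs] at hTV; linarith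
  have hsplit : ∑ i, max (1/(k:ℝ) - p i) 0 ≤ (L.card : ℝ) * (1/k) + k * (ε/(2*k)) := by
    rw [← Finset.sum_filter_add_sum_filter_not Finset.univ
      (fun i : Fin k => p i < (1 - ε / 2) / k) (fun i => max (1/(k:ℝ) - p i) 0)]
    have hb1 : ∑ i ∈ L, max (1/(k:ℝ) - p i) 0 ≤ (L.card : ℝ) * (1/k) := by
      calc ∑ i ∈ L, max (1/(k:ℝ) - p i) 0 ≤ ∑ _i ∈ L, (1/(k:ℝ)) := by
            apply Finset.sum_le_sum
            intro i _
            have := hp i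
            exact max_le (by linarith) (by positivity)
        _ = (L.card : ℝ) * (1/k) := by rw [Finset.sum_const, nsmul_eq_mul]
    have hb2 : ∑ i ∈ Finset.univ.filter (fun i : Fin k => ¬ p i < (1 - ε / 2) / k),
        max (1/(k:ℝ) - p i) 0 ≤ (k:ℝ) * (ε/(2*k)) := by
      calc ∑ i ∈ Finset.univ.filter (fun i : Fin k => ¬ p i < (1 - ε / 2) / k),
          max (1/(k:ℝ) - p i) 0
          ≤ ∑ _i ∈ Finset.univ.filter (fun i : Fin k => ¬ p i < (1 - ε / 2) / k),
            (ε/(2*(k:ℝ))) := by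
            apply Finset.sum_le_sum
            intro i hi
            simp only [Finset.mem_filter, not_lt] at hi
            have h2 : (1 - ε / 2) / (k:ℝ) ≤ p i := hi.2
            have : 1/(k:ℝ) - p i ≤ ε/(2*k) := by
              have h3 : (1:ℝ)/k - (1-ε/2)/k = ε/(2*k) := by field_simp; ring
              linarith
            exact max_le this (by positivity)
        _ ≤ (k:ℝ) * (ε/(2*k)) := by
            rw [Finset.sum_const, nsmul_eq_mul]
            have hc : ((Finset.univ.filter (fun i : Fin k => ¬ p i < (1 - ε / 2) / k)).card : ℝ)
                ≤ (k:ℝ) := by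
              exact_mod_cast (Finset.card_filter_le _ _).trans_eq (Finset.card_fin k)
            have : (0:ℝ) ≤ ε/(2*k) := by positivity
            nlinarith
    linarith
  have hfinal : ε ≤ (L.card : ℝ) * (1/k) + ε/2 := by
    have : (k:ℝ) * (ε/(2*k)) = ε/2 := by field_simp
    linarith [hε2.trans hsplit, this.symm ▸ (hε2.trans hsplit)]
  have h4 : (L.card:ℝ) * (1/k) * k = L.card := by field_simp
  nlinarith [mul_le_mul_of_nonneg_right hfinal hk0.le, h4]
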